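/- The n-th derivative of the logistic sigmoid function σ(x) = 1/(1+e^{−x}) satisfies, for every n ≥ 1 and all real x, σ^{(n)}(x) = ∑_{k=1}^{n} (−1)^{k−1} E(n, k−1) σ(x)^k (1−σ(x))^{n+1−k}, where E(n,k) = ∑_{i=0}^{k} (−1)^i C(n+1, i)(k+1−i)^n is the Eulerian number. -/

import Mathlib

open Finset Real

/-- The logistic _root_.sigmoid function. -/
noncomputable def sigmoid (x : ℝ) : ℝ := 1 / (1 + Real.exp (-x))

/-- Eulerian numbers `E(n,k) = ∑_{i=0}^{k} (−1)^i C(n+1, i)(k+1−i)^n` (as reals). -/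
noncomputable def eulerian (n k : ℕ) : ℝ :=
  ∑ i ∈ Finset.range (k + 1), (-1 : ℝ) ^ i * ((n + 1).choose i : ℝ) * ((k + 1 - i : ℕ) : ℝ) ^ n

lemma eulerian_zero (n : ℕ) : eulerian n 0 = 1 := by simp [eulerian]

lemma hasDerivAt_sigmoid (x : ℝ) :
    HasDerivAt _root_.sigmoid (_root_.sigmoid x * (1 - _root_.sigmoid x)) x := by
  have hne : 1 + Real.exp (-x) ≠ 0 := by positivity
  have h : HasDerivAt (fun x : ℝ => 1 + Real.exp (-x)) (-Real.exp (-x)) x := by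
    simpa using ((Real.hasDerivAt_exp (-x)).comp x (hasDerivAt_neg x)).const_add 1
  have h2 := h.inv hne
  have hs : _root_.sigmoid = fun x : ℝ => (1 + Real.exp (-x))⁻¹ := by
    funext y; simp [_root_.sigmoid, one_div]
  rw [hs]
  refine h2.congr_deriv ?_
  field_simp
  ring

lemma choose_aux (n i : ℕ) :
    ((n : ℝ) + 1) * (n.choose i : ℝ) = ((n : ℝ) + 1 - i) * ((n + 1).choose i : ℝ) := by
  rcases le_or_gt i (n + 1) with h | h
  · have h2 : ((n.choose i * (n + 1) : ℕ) : ℝ) = (((n + 1).choose i * (n + 1 - i) : ℕ) : ℝ) :=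
      congrArg Nat.cast (Nat.choose_mul_succ_eq n i)
    push_cast [Nat.cast_sub h] at h2
    linarith
  · rw [Nat.choose_eq_zero_of_lt (by omega), Nat.choose_eq_zero_of_lt h]
    simp

lemma eulerian_rec (n m : ℕ) :
    eulerian (n+1) (m+1)
      = ((m:ℝ)+2) * eulerian n (m+1) + ((n:ℝ) - m) * eulerian n m := by
  have hU : eulerian (n+1) (m+1)
      = (∑ i ∈ Finset.range (m+2), (-1:ℝ)^i * ((n+1).choose i : ℝ) * ((m+2-i : ℕ) : ℝ)^(n+1))
        + ∑ i ∈ Finset.range (m+1), (-1:ℝ)^(i+1) * ((n+1).choose i : ℝ) * ((m+1-i : ℕ) : ℝ)^(n+1) := by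
    rw [eulerian, Finset.sum_range_succ' _ (m+1),
        Finset.sum_range_succ' (fun i => (-1:ℝ)^i * ((n+1).choose i : ℝ) * ((m+2-i : ℕ) : ℝ)^(n+1)) (m+1)]
    have hP : ∀ i : ℕ, ((n+1+1).choose (i+1) : ℝ) = ((n+1).choose i : ℝ) + ((n+1).choose (i+1) : ℝ) :=
      fun i => by exact_mod_cast congrArg Nat.cast (Nat.choose_succ_succ (n+1) i)
    simp only [hP, show ∀ x : ℕ, m+1+1-(x+1) = m+1-x from fun x => by omega,
      show ∀ x : ℕ, m+2-(x+1) = m+1-x from fun x => by omega]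
    have hsc : ∀ x ∈ Finset.range (m+1),
        (-1:ℝ)^(x+1) * (((n+1).choose x : ℝ) + ((n+1).choose (x+1) : ℝ)) * ((m+1-x : ℕ) : ℝ)^(n+1)
          = (-1:ℝ)^(x+1) * ((n+1).choose (x+1) : ℝ) * ((m+1-x : ℕ) : ℝ)^(n+1)
            + (-1:ℝ)^(x+1) * ((n+1).choose x : ℝ) * ((m+1-x : ℕ) : ℝ)^(n+1) := by
      intro x _; ring
    rw [Finset.sum_congr rfl hsc, Finset.sum_add_distrib]
    norm_num
    ring
  rw [hU]
  have hsplit : ∀ i ∈ Finset.range (m+2),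
      (-1:ℝ)^i * ((n+1).choose i : ℝ) * ((m+2-i : ℕ) : ℝ)^(n+1)
        = ((m:ℝ)+2) * ((-1:ℝ)^i * ((n+1).choose i : ℝ) * ((m+2-i : ℕ) : ℝ)^n)
          - (i:ℝ) * ((-1:ℝ)^i * ((n+1).choose i : ℝ) * ((m+2-i : ℕ) : ℝ)^n) := by
    intro i hi
    have hi' : i ≤ m + 2 := by simp at hi; omega
    have hx : ((m+2-i : ℕ) : ℝ) = (m:ℝ) + 2 - i := by push_cast [Nat.cast_sub hi']; ring
    rw [pow_succ, hx]; ring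
  rw [Finset.sum_congr rfl hsplit, Finset.sum_sub_distrib]
  have hE1 : ∑ i ∈ Finset.range (m+2), ((m:ℝ)+2) * ((-1:ℝ)^i * ((n+1).choose i : ℝ) * ((m+2-i : ℕ) : ℝ)^n)
      = ((m:ℝ)+2) * eulerian n (m+1) := by rw [eulerian, Finset.mul_sum]
  rw [hE1]
  have hV : ∑ i ∈ Finset.range (m+2), (i:ℝ) * ((-1:ℝ)^i * ((n+1).choose i : ℝ) * ((m+2-i : ℕ) : ℝ)^n)
      = ∑ i ∈ Finset.range (m+1), -(((n:ℝ)+1) * ((-1:ℝ)^i * (n.choose i : ℝ) * ((m+1-i : ℕ) : ℝ)^n)) := by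
    rw [Finset.sum_range_succ' _ (m+1)]
    simp only [Nat.cast_zero, zero_mul, add_zero,
      show ∀ x : ℕ, m+2-(x+1) = m+1-x from fun x => by omega]
    apply Finset.sum_congr rfl
    intro i _
    have h2 := congrArg (Nat.cast : ℕ → ℝ) (Nat.add_one_mul_choose_eq n i)
    push_cast at h2
    push_cast
    linear_combination ((-1:ℝ)^i * ((m+1-i : ℕ) : ℝ)^n) * h2
  rw [hV]
  rw [show eulerian n m = ∑ i ∈ Finset.range (m+1), (-1:ℝ)^i * ((n+1).choose i : ℝ) * ((m+1-i : ℕ) : ℝ)^n from rfl,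
      Finset.mul_sum]
  rw [sub_eq_add_neg, ← Finset.sum_neg_distrib, add_assoc, ← Finset.sum_add_distrib]
  congr 1
  apply Finset.sum_congr rfl
  intro i hi
  have hi' : i ≤ m + 1 := by simp at hi; omega
  have hx : ((m+1-i : ℕ) : ℝ) = (m:ℝ) + 1 - i := by push_cast [Nat.cast_sub hi']; ring
  rw [pow_succ, hx]
  linear_combination ((-1:ℝ)^i * ((m:ℝ)+1-(i:ℝ))^n) * choose_aux n i

lemma eulerian_one (k : ℕ) (hk : 1 ≤ k) : eulerian 1 k = 0 := by
  rcases eq_or_lt_of_le hk with h | h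
  · rw [← h]; norm_num [eulerian, Finset.sum_range_succ]
  · have hsub : Finset.range 3 ⊆ Finset.range (k+1) := by
      intro i hi; simp at hi ⊢; omega
    rw [eulerian, ← Finset.sum_subset hsub]
    · rw [Finset.sum_range_succ, Finset.sum_range_succ, Finset.sum_range_succ,
        Finset.sum_range_zero]
      have h1 : ((k+1-0 : ℕ) : ℝ) = (k:ℝ)+1 := by push_cast; ring
      have h2 : ((k+1-1 : ℕ) : ℝ) = (k:ℝ) := by push_cast; ring
      have h3 : ((k+1-2 : ℕ) : ℝ) = (k:ℝ)-1 := by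
        have : k+1-2 = k-1 := by omega
        rw [this, Nat.cast_sub (by omega)]; norm_num
      rw [h1, h2, h3]
      norm_num
      ring
    · intro i hi hni
      simp at hi hni
      rw [Nat.choose_eq_zero_of_lt (by omega)]
      simp

lemma eulerian_diag (n : ℕ) (hn : 1 ≤ n) : ∀ k, n ≤ k → eulerian n k = 0 := by
  induction n, hn using Nat.le_induction with
  | base => exact fun k hk => eulerian_one k hk
  | succ n hn ih =>
    intro k hk
    obtain ⟨m, rfl⟩ : ∃ m, k = m + 1 := ⟨k - 1, by omega⟩
    rw [eulerian_rec, ih (m+1) (by omega), ih m (by omega)]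
    ring

lemma key_sum (n : ℕ) (hn : 1 ≤ n) (s : ℝ) :
    ∑ k ∈ Finset.Icc 1 n, (-1:ℝ)^(k-1) * eulerian n (k-1) *
        ((k:ℝ) * s^k * (1-s)^(n+2-k) - ((n:ℝ)+1-(k:ℝ)) * s^(k+1) * (1-s)^(n+1-k))
      = ∑ k ∈ Finset.Icc 1 (n+1), (-1:ℝ)^(k-1) * eulerian (n+1) (k-1) * s^k * (1-s)^(n+1+1-k) := by
  rw [← Finset.Ico_add_one_right_eq_Icc 1 n, Finset.sum_Ico_eq_sum_range,
      ← Finset.Ico_add_one_right_eq_Icc 1 (n+1), Finset.sum_Ico_eq_sum_range]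
  simp only [Nat.add_sub_cancel]
  have hL : ∀ i ∈ Finset.range n,
      (-1:ℝ)^(1+i-1) * eulerian n (1+i-1) *
        (((1+i : ℕ):ℝ) * s^(1+i) * (1-s)^(n+2-(1+i)) - ((n:ℝ)+1-((1+i:ℕ):ℝ)) * s^(1+i+1) * (1-s)^(n+1-(1+i)))
        = ((-1:ℝ)^i * eulerian n i * ((i:ℝ)+1) * s^(i+1) * (1-s)^((n-i)+1))
          - ((-1:ℝ)^i * eulerian n i * ((n:ℝ)-(i:ℝ)) * s^(i+2) * (1-s)^(n-i)) := by
    intro i hi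
    simp only [Finset.mem_range] at hi
    rw [show 1+i-1 = i from by omega, show n+2-(1+i) = (n-i)+1 from by omega,
        show n+1-(1+i) = n-i from by omega]
    push_cast
    ring
  rw [Finset.sum_congr rfl hL, Finset.sum_sub_distrib]
  have hA : (∑ i ∈ Finset.range n,
        (-1:ℝ)^i * eulerian n i * ((i:ℝ)+1) * s^(i+1) * (1-s)^((n-i)+1))
      = ∑ i ∈ Finset.range (n+1),
        (-1:ℝ)^i * eulerian n i * ((i:ℝ)+1) * s^(i+1) * (1-s)^((n-i)+1) := by
    rw [Finset.sum_range_succ, eulerian_diag n hn n le_rfl]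
    ring
  rw [hA, Finset.sum_range_succ'
        (fun i => (-1:ℝ)^i * eulerian n i * ((i:ℝ)+1) * s^(i+1) * (1-s)^((n-i)+1)) n,
      Finset.sum_range_succ'
        (fun k => (-1:ℝ)^(1+k-1) * eulerian (n+1) (1+k-1) * s^(1+k) * (1-s)^(n+1+1-(1+k))) n]
  have h0 : (-1:ℝ)^0 * eulerian n 0 * ((0:ℕ):ℝ)+1 = 0 ∨ True := Or.inr trivial
  have h1 : (-1:ℝ)^0 * eulerian n 0 * (((0:ℕ):ℝ)+1) * s^(0+1) * (1-s)^((n-0)+1)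
      = (-1:ℝ)^(1+0-1) * eulerian (n+1) (1+0-1) * s^(1+0) * (1-s)^(n+1+1-(1+0)) := by
    rw [show n-0+1 = n+1 from by omega, show n+1+1-(1+0) = n+1 from by omega,
        show 1+0-1 = 0 from by omega]
    norm_num [eulerian_zero]
  have hXY : (∑ i ∈ Finset.range n,
        (-1:ℝ)^(i+1) * eulerian n (i+1) * (((i+1:ℕ):ℝ)+1) * s^(i+1+1) * (1-s)^((n-(i+1))+1))
      - (∑ i ∈ Finset.range n,
        (-1:ℝ)^i * eulerian n i * ((n:ℝ)-(i:ℝ)) * s^(i+2) * (1-s)^(n-i))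
      = ∑ i ∈ Finset.range n,
        (-1:ℝ)^(1+(i+1)-1) * eulerian (n+1) (1+(i+1)-1) * s^(1+(i+1)) * (1-s)^(n+1+1-(1+(i+1))) := by
    rw [← Finset.sum_sub_distrib]
    apply Finset.sum_congr rfl
    intro i hi
    simp only [Finset.mem_range] at hi
    rw [show 1+(i+1)-1 = i+1 from by omega, show n+1+1-(1+(i+1)) = n-i from by omega,
        show n-(i+1)+1 = n-i from by omega]
    push_cast
    linear_combination ((-1:ℝ)^i * s^(i+2) * (1-s)^(n-i)) * eulerian_rec n i
  push_cast at h1 hXY ⊢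
  linarith [hXY, h1]

theorem iteratedDeriv_sigmoid (n : ℕ) (hn : 1 ≤ n) (x : ℝ) :
    iteratedDeriv n _root_.sigmoid x
      = ∑ k ∈ Finset.Icc 1 n,
          (-1 : ℝ) ^ (k - 1) * eulerian n (k - 1) * _root_.sigmoid x ^ k
            * (1 - _root_.sigmoid x) ^ (n + 1 - k) := by
  induction n, hn using Nat.le_induction generalizing x with
  | base =>
    rw [iteratedDeriv_one, (_root_.hasDerivAt_sigmoid x).deriv, Finset.Icc_self,
      Finset.sum_singleton]
    norm_num [eulerian_zero]
  | succ n hn ih =>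
    have hfun : iteratedDeriv n _root_.sigmoid
        = fun y => ∑ k ∈ Finset.Icc 1 n,
            (-1 : ℝ) ^ (k - 1) * eulerian n (k - 1) * _root_.sigmoid y ^ k
              * (1 - _root_.sigmoid y) ^ (n + 1 - k) := funext fun y => ih y
    rw [iteratedDeriv_succ, hfun]
    have hterm : ∀ k ∈ Finset.Icc 1 n,
        HasDerivAt (fun y => (-1 : ℝ) ^ (k - 1) * eulerian n (k - 1) * _root_.sigmoid y ^ k
              * (1 - _root_.sigmoid y) ^ (n + 1 - k))
          ((-1:ℝ)^(k-1) * eulerian n (k-1) *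
            ((k:ℝ) * _root_.sigmoid x ^ k * (1 - _root_.sigmoid x)^(n+2-k)
              - ((n:ℝ)+1-(k:ℝ)) * _root_.sigmoid x ^(k+1) * (1 - _root_.sigmoid x)^(n+1-k))) x := by
      intro k hk
      simp only [Finset.mem_Icc] at hk
      obtain ⟨j, rfl⟩ : ∃ j, k = j + 1 := ⟨k - 1, by omega⟩
      obtain ⟨d, rfl⟩ : ∃ d, n = (j + 1) + d := ⟨n - (j+1), by omega⟩
      have h1 : HasDerivAt (fun y => _root_.sigmoid y ^ (j+1))
          (((j:ℝ)+1) * _root_.sigmoid x ^ j * (_root_.sigmoid x * (1 - _root_.sigmoid x))) x := by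
        have := (_root_.hasDerivAt_sigmoid x).fun_pow (j+1)
        push_cast at this
        simpa using this
      have h2 : HasDerivAt (fun y => (1 - _root_.sigmoid y) ^ (d+1))
          (((d:ℝ)+1) * (1 - _root_.sigmoid x) ^ d * (-(_root_.sigmoid x * (1 - _root_.sigmoid x)))) x := by
        have := ((_root_.hasDerivAt_sigmoid x).const_sub 1).fun_pow (d+1)
        push_cast at this
        simpa using this
      have h3 := (h1.mul h2).const_mul ((-1:ℝ)^(j+1-1) * eulerian (j+1+d) (j+1-1))
      rw [show j+1+d+1-(j+1) = d+1 from by omega, show j+1+d+2-(j+1) = d+2 from by omega]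
      refine (h3.congr_deriv ?_).congr_of_eventuallyEq (Filter.Eventually.of_forall fun y => ?_)
      · push_cast
        ring
      · simp only [Pi.mul_apply]; ring
    have hsum := HasDerivAt.fun_sum hterm
    rw [hsum.deriv]
    exact key_sum n hn (_root_.sigmoid x)
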